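/- Let T(x) = x(1 − V(x)) for x near 0, where T is invertible near 0 and V : [0,∞) → (0,1) is continuous, increasing, and regularly varying at 0 with index σ > 0. Let b be the inverse function of x ↦ 1/V(1/x) and let (w_n) be defined by w_{n+1} = T(w_n) with w₀ > 0 close enough to 0. Then d(w_n, w_{n+1}) ~ (1/σ^{1+1/σ}) · 1/(n·b(n)) as n → ∞, i.e. lim_{n→∞} |w_n − w_{n+1}| · σ^{1+1/σ} n b(n) = 1. -/

import Mathlib

open Set Filter Topology Real

/-- `V` is regularly varying at `0` with index `σ`. -/
def RegVary0 (V : ℝ → ℝ) (σ : ℝ) : Prop :=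
  ∀ t > (0:ℝ), Tendsto (fun x => V (t * x) / V x) (𝓝[>] 0) (𝓝 (t ^ σ))

lemma aux_V_zero (V : ℝ → ℝ) (σ : ℝ) (hσ : 0 < σ)
    (hVcont : ContinuousOn V (Ici 0))
    (hVrange : ∀ x > (0:ℝ), V x ∈ Ioo (0:ℝ) 1)
    (hVreg : RegVary0 V σ) : V 0 = 0 := by
  have hcont : Tendsto V (𝓝[>] (0:ℝ)) (𝓝 (V 0)) := by
    have := (hVcont 0 (by simp)).tendsto
    exact this.mono_left (nhdsWithin_mono 0 (by intro x hx; exact le_of_lt (show (0:ℝ) < x from hx)))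
  have hge : (0:ℝ) ≤ V 0 := by
    refine ge_of_tendsto hcont ?_
    exact eventually_mem_nhdsWithin.mono fun x hx => (hVrange x hx).1.le
  by_contra hne
  have h : 0 < V 0 := lt_of_le_of_ne hge (Ne.symm hne)
  have h2 : Tendsto (fun x : ℝ => 2 * x) (𝓝[>] (0:ℝ)) (𝓝[>] (0:ℝ)) := by
    apply tendsto_nhdsWithin_of_tendsto_nhds_of_eventually_within
    · have : Tendsto (fun x : ℝ => 2 * x) (𝓝 (0:ℝ)) (𝓝 (2 * 0)) :=
        ((continuous_const.mul continuous_id).tendsto 0)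
      rw [mul_zero] at this
      exact this.mono_left nhdsWithin_le_nhds
    · exact eventually_mem_nhdsWithin.mono fun x hx => mem_Ioi.2 (mul_pos two_pos (mem_Ioi.1 hx))
  have hnum : Tendsto (fun x : ℝ => V (2 * x)) (𝓝[>] (0:ℝ)) (𝓝 (V 0)) := hcont.comp h2
  have hrat : Tendsto (fun x : ℝ => V (2 * x) / V x) (𝓝[>] (0:ℝ)) (𝓝 (V 0 / V 0)) :=
    hnum.div hcont hne
  have h1 : V 0 / V 0 = 1 := div_self hne
  have h2σ := tendsto_nhds_unique hrat (hVreg 2 two_pos)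
  rw [h1] at h2σ
  have hgt : (1:ℝ) < 2 ^ σ := by
    rw [Real.one_lt_rpow_iff_of_pos two_pos]; exact Or.inl ⟨one_lt_two, hσ⟩
  linarith [h2σ, hgt]

lemma aux_tendsto_V0 (V : ℝ → ℝ) (σ : ℝ) (hσ : 0 < σ)
    (hVcont : ContinuousOn V (Ici 0))
    (hVrange : ∀ x > (0:ℝ), V x ∈ Ioo (0:ℝ) 1)
    (hVreg : RegVary0 V σ) : Tendsto V (𝓝[>] (0:ℝ)) (𝓝 0) := by
  have hcont : Tendsto V (𝓝[>] (0:ℝ)) (𝓝 (V 0)) := by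
    have := (hVcont 0 (by simp)).tendsto
    exact this.mono_left (nhdsWithin_mono 0 (by intro x hx; exact le_of_lt (show (0:ℝ) < x from hx)))
  rwa [aux_V_zero V σ hσ hVcont hVrange hVreg] at hcont

lemma aux_ratio_seq (V : ℝ → ℝ) (σ : ℝ) (hσ : 0 < σ)
    (hVmono : StrictMonoOn V (Ici 0))
    (hVrange : ∀ x > (0:ℝ), V x ∈ Ioo (0:ℝ) 1)
    (hVreg : RegVary0 V σ)
    {x t : ℕ → ℝ} {c : ℝ} (hc : 0 < c)
    (hx : Tendsto x atTop (𝓝[>] (0:ℝ)))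
    (ht : Tendsto t atTop (𝓝 c)) :
    Tendsto (fun n => V (t n * x n) / V (x n)) atTop (𝓝 (c ^ σ)) := by
  have hxpos : ∀ᶠ n in atTop, 0 < x n := hx.eventually eventually_mem_nhdsWithin
  have hrpow_cont : ContinuousAt (fun u : ℝ => u ^ σ) c :=
    Real.continuousAt_rpow_const c σ (Or.inl hc.ne')
  rw [tendsto_order]
  constructor
  · -- a < c^σ : lower bound
    intro a ha
    have hev : ∀ᶠ u in 𝓝[<] c, a < u ^ σ ∧ 0 < u :=
      ((hrpow_cont.tendsto.eventually (eventually_gt_nhds ha)).and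
        (eventually_gt_nhds hc)).filter_mono nhdsWithin_le_nhds
    have hev2 : ∀ᶠ u in 𝓝[<] c, u < c := eventually_mem_nhdsWithin
    obtain ⟨u, ⟨hau, hu0⟩, huc⟩ := (hev.and hev2).exists
    have hkey : Tendsto (fun n => V (u * x n) / V (x n)) atTop (𝓝 (u ^ σ)) :=
      (hVreg u hu0).comp hx
    have hev3 : ∀ᶠ n in atTop, a < V (u * x n) / V (x n) :=
      hkey.eventually (eventually_gt_nhds hau)
    have hev4 : ∀ᶠ n in atTop, u < t n := ht.eventually (eventually_gt_nhds huc)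
    filter_upwards [hev3, hev4, hxpos] with n h3 h4 hxp
    refine lt_of_lt_of_le h3 ?_
    have hVx : 0 < V (x n) := (hVrange _ hxp).1
    rw [div_le_div_iff_of_pos_right hVx]
    exact (hVmono.monotoneOn) (mem_Ici.2 (mul_nonneg hu0.le hxp.le))
      (mem_Ici.2 (mul_nonneg (hu0.trans h4).le hxp.le))
      (mul_le_mul_of_nonneg_right h4.le hxp.le)
  · -- c^σ < b : upper bound
    intro b hb
    have hev : ∀ᶠ u in 𝓝[>] c, u ^ σ < b :=
      (hrpow_cont.tendsto.eventually (eventually_lt_nhds hb)).filter_mono nhdsWithin_le_nhds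
    have hev2 : ∀ᶠ u in 𝓝[>] c, c < u := eventually_mem_nhdsWithin
    obtain ⟨u, hub, hcu⟩ := (hev.and hev2).exists
    have hu0 : 0 < u := hc.trans hcu
    have hkey : Tendsto (fun n => V (u * x n) / V (x n)) atTop (𝓝 (u ^ σ)) :=
      (hVreg u hu0).comp hx
    have hev3 : ∀ᶠ n in atTop, V (u * x n) / V (x n) < b :=
      hkey.eventually (eventually_lt_nhds hub)
    have hev4 : ∀ᶠ n in atTop, t n < u := ht.eventually (eventually_lt_nhds hcu)
    have hev5 : ∀ᶠ n in atTop, 0 < t n := ht.eventually (eventually_gt_nhds hc)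
    filter_upwards [hev3, hev4, hev5, hxpos] with n h3 h4 h5 hxp
    refine lt_of_le_of_lt ?_ h3
    have hVx : 0 < V (x n) := (hVrange _ hxp).1
    rw [div_le_div_iff_of_pos_right hVx]
    exact (hVmono.monotoneOn) (mem_Ici.2 (mul_nonneg h5.le hxp.le))
      (mem_Ici.2 (mul_nonneg hu0.le hxp.le))
      (mul_le_mul_of_nonneg_right h4.le hxp.le)

lemma aux_intble (V : ℝ → ℝ) (hVcont : ContinuousOn V (Ici 0))
    (hVrange : ∀ x > (0:ℝ), V x ∈ Ioo (0:ℝ) 1)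
    {a b : ℝ} (ha : 0 < a) (hab : a ≤ b) :
    IntervalIntegrable (fun u => (u * V u)⁻¹) MeasureTheory.volume a b := by
  apply ContinuousOn.intervalIntegrable
  rw [uIcc_of_le hab]
  apply ContinuousOn.inv₀
  · exact (continuousOn_id.mul (hVcont.mono (fun u hu => le_trans ha.le hu.1))).congr
      (fun u hu => rfl)
  · intro u hu
    have hu0 : 0 < u := lt_of_lt_of_le ha hu.1
    exact (mul_pos hu0 (hVrange u hu0).1).ne'

lemma aux_int_bounds (V : ℝ → ℝ) (hVcont : ContinuousOn V (Ici 0))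
    (hVmono : StrictMonoOn V (Ici 0))
    (hVrange : ∀ x > (0:ℝ), V x ∈ Ioo (0:ℝ) 1)
    {a b : ℝ} (ha : 0 < a) (hab : a ≤ b) :
    (b - a) * (b * V b)⁻¹ ≤ (∫ u in a..b, (u * V u)⁻¹) ∧
      (∫ u in a..b, (u * V u)⁻¹) ≤ (b - a) * (a * V a)⁻¹ := by
  have hmono : ∀ u v, 0 < u → u ≤ v → (v * V v)⁻¹ ≤ (u * V u)⁻¹ := by
    intro u v hu huv
    have hv : 0 < v := lt_of_lt_of_le hu huv
    have h1 : 0 < u * V u := mul_pos hu (hVrange u hu).1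
    apply inv_anti₀ h1
    exact mul_le_mul huv ((hVmono.monotoneOn) (mem_Ici.2 hu.le) (mem_Ici.2 hv.le) huv)
      (hVrange u hu).1.le hv.le
  constructor
  · have := intervalIntegral.integral_mono_on hab (intervalIntegrable_const)
      (aux_intble V hVcont hVrange ha hab)
      (fun u hu => hmono u b (lt_of_lt_of_le ha hu.1) hu.2)
    simpa [mul_comm, mul_left_comm] using this
  · have := intervalIntegral.integral_mono_on hab
      (aux_intble V hVcont hVrange ha hab) (intervalIntegrable_const)
      (fun u hu => hmono a u ha hu.1)
    simpa [mul_comm, mul_left_comm] using this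

lemma aux_slope (σ : ℝ) :
    Tendsto (fun r : ℝ => (r ^ σ - 1) / (r - 1)) (𝓝[>] (1:ℝ)) (𝓝 σ) := by
  have hd : HasDerivAt (fun r : ℝ => r ^ σ) (σ * (1:ℝ) ^ (σ - 1)) 1 :=
    Real.hasDerivAt_rpow_const (Or.inl one_ne_zero)
  rw [Real.one_rpow, mul_one] at hd
  have := hasDerivAt_iff_tendsto_slope.1 hd
  have h2 := this.mono_left (nhdsWithin_mono 1 (fun r hr => ne_of_gt hr))
  refine h2.congr (fun r => ?_)
  simp [slope_def_field, div_eq_div_iff]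

set_option maxHeartbeats 1000000 in
lemma aux_karamata (V : ℝ → ℝ) (σ x₀ : ℝ) (hσ : 0 < σ) (hx₀ : 0 < x₀)
    (hVcont : ContinuousOn V (Ici 0)) (hVmono : StrictMonoOn V (Ici 0))
    (hVrange : ∀ x > (0:ℝ), V x ∈ Ioo (0:ℝ) 1) (hVreg : RegVary0 V σ) :
    Tendsto (fun x => (∫ u in x..x₀, (u * V u)⁻¹) * V x) (𝓝[>] (0:ℝ)) (𝓝 (1/σ)) := by
  classical
  set G : ℝ → ℝ := fun x => ∫ u in x..x₀, (u * V u)⁻¹ with hG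
  -- basic G facts
  have hGsplit : ∀ x y : ℝ, 0 < x → x ≤ y → y ≤ x₀ →
      G x = (∫ u in x..y, (u * V u)⁻¹) + G y := by
    intro x y hx hxy hyx₀
    exact (intervalIntegral.integral_add_adjacent_intervals
      (aux_intble V hVcont hVrange hx hxy)
      (aux_intble V hVcont hVrange (lt_of_lt_of_le hx hxy) hyx₀)).symm
  have hGnonneg : ∀ x : ℝ, 0 < x → x ≤ x₀ → 0 ≤ G x := by
    intro x hx hxx₀
    refine le_trans ?_ (aux_int_bounds V hVcont hVmono hVrange hx hxx₀).1
    have h1 : 0 < V x₀ := (hVrange x₀ hx₀).1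
    have h2 : 0 ≤ x₀ - x := by linarith
    positivity
  have hGmono : ∀ x y : ℝ, 0 < x → x ≤ y → y ≤ x₀ → G y ≤ G x := by
    intro x y hx hxy hyx₀
    rw [hGsplit x y hx hxy hyx₀]
    have h1 : 0 ≤ ∫ u in x..y, (u * V u)⁻¹ := by
      refine le_trans ?_ (aux_int_bounds V hVcont hVmono hVrange hx hxy).1
      have hy : 0 < y := lt_of_lt_of_le hx hxy
      have : 0 < V y := (hVrange y hy).1
      have : 0 ≤ y - x := by linarith
      positivity
    linarith
  have hGpos : ∀ x : ℝ, 0 < x → x < x₀ → 0 < G x := by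
    intro x hx hxx₀
    refine lt_of_lt_of_le ?_ (aux_int_bounds V hVcont hVmono hVrange hx hxx₀.le).1
    have h1 : 0 < V x₀ := (hVrange x₀ hx₀).1
    have : 0 < x₀ - x := by linarith
    positivity
  -- the key annulus estimate
  have key : ∀ r : ℝ, 1 < r → ∀ ε : ℝ, 0 < ε → ε < r ^ σ - 1 →
      ∃ C : ℝ, 0 ≤ C ∧ ∀ k₀ : ℕ, ∀ᶠ x in 𝓝[>] (0:ℝ),
        ((r ^ σ + ε)⁻¹ * (r - 1) / r) * (1 - ((r ^ σ + ε)⁻¹) ^ k₀) / (1 - (r ^ σ + ε)⁻¹)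
            ≤ G x * V x ∧
        G x * V x ≤ (r - 1) / (1 - ((r ^ σ - ε)⁻¹)) + ((r ^ σ - ε)⁻¹) ^ k₀ * C := by
    intro r hr ε hε hεs
    have hr0 : (0:ℝ) < r := lt_trans one_pos hr
    have hrσ : 1 < r ^ σ := by linarith
    have hqden : 1 < r ^ σ - ε := by linarith
    have hq1 : (r ^ σ - ε)⁻¹ < 1 := by
      rw [inv_lt_one_iff₀]; right; exact hqden
    have hq0 : 0 < (r ^ σ - ε)⁻¹ := by positivity
    have hq'den : 1 < r ^ σ + ε := by linarith
    have hq'1 : (r ^ σ + ε)⁻¹ < 1 := by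
      rw [inv_lt_one_iff₀]; right; exact hq'den
    have hq'0 : 0 < (r ^ σ + ε)⁻¹ := by positivity
    set q : ℝ := (r ^ σ - ε)⁻¹ with hqdef
    set q' : ℝ := (r ^ σ + ε)⁻¹ with hq'def
    -- obtain y₀
    have hevr : ∀ᶠ y in 𝓝[>] (0:ℝ), V (r * y) / V y ∈ Ioo (r ^ σ - ε) (r ^ σ + ε) :=
      (hVreg r hr0).eventually (Ioo_mem_nhds (by linarith) (by linarith))
    obtain ⟨y₁, hy₁, hsub⟩ := mem_nhdsGT_iff_exists_Ioc_subset.1 hevr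
    set y₀ : ℝ := min y₁ (x₀ / r) with hy₀def
    have hy₀pos : 0 < y₀ := lt_min hy₁ (by positivity)
    have hy₀x : y₀ ≤ x₀ / r := min_le_right _ _
    have hy₀x₀ : y₀ ≤ x₀ := hy₀x.trans (div_le_self hx₀.le hr.le)
    have hratio : ∀ y : ℝ, 0 < y → y ≤ y₀ →
        r ^ σ - ε < V (r * y) / V y ∧ V (r * y) / V y < r ^ σ + ε := by
      intro y hy hyle
      exact hsub ⟨hy, hyle.trans (min_le_left _ _)⟩
    -- ratio consequences
    have hVx_le : ∀ y : ℝ, 0 < y → y ≤ y₀ → V y ≤ q * V (r * y) := by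
      intro y hy hyle
      have h1 := (hratio y hy hyle).1
      have hVy : 0 < V y := (hVrange y hy).1
      have h2 : (r ^ σ - ε) * V y < V (r * y) := (lt_div_iff₀ hVy).1 h1
      rw [hqdef, inv_mul_eq_div, le_div_iff₀ (by linarith : (0:ℝ) < r ^ σ - ε)]
      linarith
    have hVx_ge : ∀ y : ℝ, 0 < y → y ≤ y₀ → q' * V (r * y) ≤ V y := by
      intro y hy hyle
      have h1 := (hratio y hy hyle).2
      have hVy : 0 < V y := (hVrange y hy).1
      have h2 : V (r * y) < V y * (r ^ σ + ε) := by
        have := (div_lt_iff₀ hVy).1 h1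
        linarith
      rw [hq'def, inv_mul_eq_div, div_le_iff₀ (by linarith : (0:ℝ) < r ^ σ + ε)]
      linarith
    refine ⟨G (y₀ / r), hGnonneg _ (by positivity) (by
      calc y₀ / r ≤ y₀ := div_le_self hy₀pos.le hr.le
      _ ≤ x₀ := hy₀x₀), ?_⟩
    -- the annulus induction, upper
    have Pup : ∀ k : ℕ, ∀ x : ℝ, 0 < x → y₀ / r ^ (k+1) < x → x ≤ y₀ / r ^ k →
        G x * V x ≤ (r - 1) / (1 - q) + q ^ k * G (y₀ / r) := by
      intro k
      induction k with
      | zero =>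
        intro x hx h1 h2
        rw [pow_zero, div_one] at h2
        rw [pow_one] at h1
        have hVx1 : V x < 1 := (hVrange x hx).2
        have hGx : 0 ≤ G x := hGnonneg x hx (h2.trans hy₀x₀)
        have h3 : G x * V x ≤ G x := by nlinarith [hVrange x hx]
        have h4 : G x ≤ G (y₀ / r) := hGmono _ _ (by positivity) h1.le (h2.trans hy₀x₀)
        have h5 : 0 ≤ (r - 1) / (1 - q) := by
          apply div_nonneg (by linarith) (by linarith)
        rw [pow_zero, one_mul]
        linarith
      | succ k ih =>
        intro x hx h1 h2
        have hrx : 0 < r * x := by positivity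
        have hrx1 : y₀ / r ^ (k+1) < r * x := by
          rw [div_lt_iff₀ (by positivity)] at h1 ⊢
          calc y₀ < x * r ^ (k+2) := h1
          _ = r * x * r ^ (k+1) := by ring
        have hrx2 : r * x ≤ y₀ / r ^ k := by
          rw [le_div_iff₀ (by positivity)] at h2 ⊢
          calc r * x * r ^ k = x * r ^ (k+1) := by ring
          _ ≤ y₀ := h2
        have hxy₀ : x ≤ y₀ := h2.trans (div_le_self hy₀pos.le (one_le_pow₀ hr.le))
        have hrxx₀ : r * x ≤ x₀ := by
          have : r * x ≤ y₀ := hrx2.trans (div_le_self hy₀pos.le (one_le_pow₀ hr.le))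
          exact this.trans hy₀x₀
        have hxle : x ≤ r * x := le_mul_of_one_le_left hx.le hr.le
        have hsplit := hGsplit x (r * x) hx hxle hrxx₀
        have hint := (aux_int_bounds V hVcont hVmono hVrange hx hxle).2
        have hVx : 0 < V x := (hVrange x hx).1
        have hVrx : 0 < V (r * x) := (hVrange _ hrx).1
        have hterm : (r * x - x) * (x * V x)⁻¹ * V x = r - 1 := by
          field_simp
        have hGrx : 0 ≤ G (r * x) := hGnonneg _ hrx hrxx₀
        have hih := ih (r * x) hrx hrx1 hrx2
        have hVle := hVx_le x hx hxy₀
        have step1 : G x * V x ≤ (r - 1) + G (r * x) * V x := by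
          rw [hsplit, add_mul]
          have : (∫ u in x..r * x, (u * V u)⁻¹) * V x ≤ r - 1 := by
            rw [← hterm]
            exact mul_le_mul_of_nonneg_right hint hVx.le
          linarith
        have step2 : G (r * x) * V x ≤ q * (G (r * x) * V (r * x)) := by
          calc G (r * x) * V x ≤ G (r * x) * (q * V (r * x)) :=
                mul_le_mul_of_nonneg_left hVle hGrx
          _ = q * (G (r * x) * V (r * x)) := by ring
        have step3 : q * (G (r * x) * V (r * x)) ≤ q * ((r - 1) / (1 - q) + q ^ k * G (y₀ / r)) :=
          mul_le_mul_of_nonneg_left hih hq0.le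
        have halg : (r - 1) + q * ((r - 1) / (1 - q) + q ^ k * G (y₀ / r))
            = (r - 1) / (1 - q) + q ^ (k+1) * G (y₀ / r) := by
          have hq1' : (1:ℝ) - q ≠ 0 := by linarith
          field_simp
          ring
        linarith
    -- the annulus induction, lower
    have Plow : ∀ k : ℕ, ∀ x : ℝ, 0 < x → y₀ / r ^ (k+1) < x → x ≤ y₀ / r ^ k →
        (q' * (r - 1) / r) * (1 - q' ^ k) / (1 - q') ≤ G x * V x := by
      intro k
      induction k with
      | zero =>
        intro x hx h1 h2
        rw [pow_zero, div_one] at h2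
        have hVx : 0 < V x := (hVrange x hx).1
        have hGx : 0 ≤ G x := hGnonneg x hx (h2.trans hy₀x₀)
        rw [pow_zero]
        simp only [sub_self, mul_zero, zero_div]
        positivity
      | succ k ih =>
        intro x hx h1 h2
        have hrx : 0 < r * x := by positivity
        have hrx1 : y₀ / r ^ (k+1) < r * x := by
          rw [div_lt_iff₀ (by positivity)] at h1 ⊢
          calc y₀ < x * r ^ (k+2) := h1
          _ = r * x * r ^ (k+1) := by ring
        have hrx2 : r * x ≤ y₀ / r ^ k := by
          rw [le_div_iff₀ (by positivity)] at h2 ⊢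
          calc r * x * r ^ k = x * r ^ (k+1) := by ring
          _ ≤ y₀ := h2
        have hxy₀ : x ≤ y₀ := h2.trans (div_le_self hy₀pos.le (one_le_pow₀ hr.le))
        have hrxx₀ : r * x ≤ x₀ := by
          have : r * x ≤ y₀ := hrx2.trans (div_le_self hy₀pos.le (one_le_pow₀ hr.le))
          exact this.trans hy₀x₀
        have hxle : x ≤ r * x := le_mul_of_one_le_left hx.le hr.le
        have hsplit := hGsplit x (r * x) hx hxle hrxx₀
        have hint := (aux_int_bounds V hVcont hVmono hVrange hx hxle).1
        have hVx : 0 < V x := (hVrange x hx).1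
        have hVrx : 0 < V (r * x) := (hVrange _ hrx).1
        have hGrx : 0 ≤ G (r * x) := hGnonneg _ hrx hrxx₀
        have hih := ih (r * x) hrx hrx1 hrx2
        have hVge := hVx_ge x hx hxy₀
        have hterm : (r * x - x) * ((r * x) * V (r * x))⁻¹ * V x
            = (r - 1) / r * (V x / V (r * x)) := by
          field_simp
        have hratge : q' ≤ V x / V (r * x) := by
          rw [le_div_iff₀ hVrx]
          linarith
        have step1 : (r - 1) / r * q' + G (r * x) * V x ≤ G x * V x := by
          rw [hsplit, add_mul]
          have h5 : (r - 1) / r * q' ≤ (∫ u in x..r * x, (u * V u)⁻¹) * V x := by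
            calc (r - 1) / r * q' ≤ (r - 1) / r * (V x / V (r * x)) := by
                  apply mul_le_mul_of_nonneg_left hratge
                  apply div_nonneg (by linarith) hr0.le
            _ = (r * x - x) * ((r * x) * V (r * x))⁻¹ * V x := hterm.symm
            _ ≤ (∫ u in x..r * x, (u * V u)⁻¹) * V x :=
                  mul_le_mul_of_nonneg_right hint hVx.le
          linarith
        have step2 : q' * (G (r * x) * V (r * x)) ≤ G (r * x) * V x := by
          calc q' * (G (r * x) * V (r * x)) = G (r * x) * (q' * V (r * x)) := by ring
          _ ≤ G (r * x) * V x := mul_le_mul_of_nonneg_left hVge hGrx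
        have step3 : q' * ((q' * (r - 1) / r) * (1 - q' ^ k) / (1 - q'))
            ≤ q' * (G (r * x) * V (r * x)) := mul_le_mul_of_nonneg_left hih hq'0.le
        have halg : (r - 1) / r * q' + q' * ((q' * (r - 1) / r) * (1 - q' ^ k) / (1 - q'))
            = (q' * (r - 1) / r) * (1 - q' ^ (k+1)) / (1 - q') := by
          have hq1' : (1:ℝ) - q' ≠ 0 := by linarith
          field_simp
          ring
        linarith
    -- eventual statement
    intro k₀
    have hmem : Ioc (0:ℝ) (y₀ / r ^ k₀) ∈ 𝓝[>] (0:ℝ) := by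
      apply Ioc_mem_nhdsGT_of_mem
      constructor
      · exact le_refl 0
      · positivity
    filter_upwards [hmem] with x hx
    obtain ⟨hx0, hxle⟩ := hx
    have hex : ∃ k : ℕ, y₀ / r ^ (k+1) < x := by
      obtain ⟨m, hm⟩ := pow_unbounded_of_one_lt (y₀ / x) hr
      refine ⟨m, ?_⟩
      rw [div_lt_iff₀ (by positivity)]
      rw [div_lt_iff₀ hx0] at hm
      calc y₀ < r ^ m * x := hm
      _ ≤ r ^ (m+1) * x := by
          apply mul_le_mul_of_nonneg_right _ hx0.le
          exact pow_le_pow_right₀ hr.le (Nat.le_succ m)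
      _ = x * r ^ (m+1) := by ring
    set k := Nat.find hex with hkdef
    have hk1 : y₀ / r ^ (k+1) < x := Nat.find_spec hex
    have hk2 : x ≤ y₀ / r ^ k := by
      rcases Nat.eq_zero_or_pos k with h0 | hpos
      · rw [h0, pow_zero, div_one]
        exact hxle.trans (div_le_self hy₀pos.le (one_le_pow₀ hr.le))
      · obtain ⟨j, hj⟩ := Nat.exists_eq_succ_of_ne_zero hpos.ne'
        have hmin : ¬ y₀ / r ^ (j + 1) < x :=
          Nat.find_min hex (by rw [hkdef] at hj; omega)
        rw [hj]
        exact not_lt.1 hmin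
    have hk₀k : k₀ ≤ k := by
      by_contra hcon
      push_neg at hcon
      have h1 : y₀ / r ^ (k+1) < y₀ / r ^ k₀ := lt_of_lt_of_le hk1 hxle
      rw [div_lt_div_iff₀ (by positivity) (by positivity)] at h1
      have h2 : r ^ k₀ < r ^ (k + 1) := by
        have := (mul_lt_mul_iff_right₀ hy₀pos).1 h1
        linarith
      have := (pow_lt_pow_iff_right₀ hr).1 h2
      omega
    constructor
    · refine le_trans ?_ (Plow k x hx0 hk1 hk2)
      have h1 : q' ^ k ≤ q' ^ k₀ := pow_le_pow_of_le_one hq'0.le hq'1.le hk₀k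
      have hA : 0 ≤ q' * (r - 1) / r := div_nonneg (mul_nonneg hq'0.le (by linarith)) hr0.le
      have hc : (0:ℝ) < 1 - q' := by linarith
      rw [div_le_div_iff_of_pos_right hc]
      have h3 : 1 - q' ^ k₀ ≤ 1 - q' ^ k := by linarith
      exact mul_le_mul_of_nonneg_left h3 hA
    · refine le_trans (Pup k x hx0 hk1 hk2) ?_
      have h1 : q ^ k ≤ q ^ k₀ := pow_le_pow_of_le_one hq0.le hq1.le hk₀k
      have h2 : 0 ≤ G (y₀ / r) := hGnonneg _ (by positivity) (by
        calc y₀ / r ≤ y₀ := div_le_self hy₀pos.le hr.le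
        _ ≤ x₀ := hy₀x₀)
      have h3 := mul_le_mul_of_nonneg_right h1 h2
      linarith
    -- outer limit argument
  have hσ0 : σ ≠ 0 := hσ.ne'
  have hslope' : Tendsto (fun r : ℝ => (r - 1) / (r ^ σ - 1)) (𝓝[>] (1:ℝ)) (𝓝 σ⁻¹) := by
    have h := (aux_slope σ).inv₀ hσ0
    refine h.congr fun r => ?_
    rw [inv_div]
  have hcontσ : Tendsto (fun r : ℝ => r ^ σ) (𝓝[>] (1:ℝ)) (𝓝 1) := by
    have h := (Real.continuousAt_rpow_const 1 σ (Or.inl one_ne_zero)).tendsto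
    rw [Real.one_rpow] at h
    exact h.mono_left nhdsWithin_le_nhds
  have hr_id : Tendsto (fun r : ℝ => r) (𝓝[>] (1:ℝ)) (𝓝 1) :=
    tendsto_id.mono_right nhdsWithin_le_nhds
  have hev1 : ∀ᶠ r in 𝓝[>] (1:ℝ), 1 < r := eventually_mem_nhdsWithin
  have hev2 : ∀ᶠ r in 𝓝[>] (1:ℝ), r ^ σ < 2 :=
    hcontσ.eventually (eventually_lt_nhds one_lt_two)
  have hrσgt : ∀ r : ℝ, 1 < r → 1 < r ^ σ := fun r hr =>
    (Real.one_lt_rpow_iff_of_pos (by linarith)).2 (Or.inl ⟨hr, hσ⟩)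
  rw [tendsto_order]
  constructor
  · -- lower bound branch
    intro a ha
    have hΨ : Tendsto (fun r : ℝ =>
        ((r ^ σ + (r ^ σ - 1) ^ 2)⁻¹ * (r - 1) / r) /
          (1 - (r ^ σ + (r ^ σ - 1) ^ 2)⁻¹)) (𝓝[>] (1:ℝ)) (𝓝 (1/σ)) := by
      rw [one_div]
      have h2base : Tendsto (fun r : ℝ => r * (1 + (r ^ σ - 1))) (𝓝[>] (1:ℝ))
          (𝓝 (1 * (1 + (1 - 1)))) :=
        hr_id.mul (tendsto_const_nhds.add (hcontσ.sub tendsto_const_nhds))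
      rw [show (1:ℝ) * (1 + (1 - 1)) = 1 by norm_num] at h2base
      have h2 := h2base.inv₀ one_ne_zero
      rw [inv_one] at h2
      have hprod := hslope'.mul h2
      rw [mul_one] at hprod
      refine hprod.congr' ?_
      filter_upwards [hev1, hev2] with r hr1 hr2
      have hs : 0 < r ^ σ - 1 := by linarith [hrσgt r hr1]
      have hs1 : r ^ σ - 1 < 1 := by linarith
      have hd1 : r ^ σ + (r ^ σ - 1) ^ 2 ≠ 0 := by nlinarith
      have hd2 : r ^ σ + (r ^ σ - 1) ^ 2 - 1 ≠ 0 := by nlinarith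
      have hd3 : 1 - (r ^ σ + (r ^ σ - 1) ^ 2)⁻¹ ≠ 0 := by
        have h5 : 1 < r ^ σ + (r ^ σ - 1) ^ 2 := by nlinarith
        have h6 : (r ^ σ + (r ^ σ - 1) ^ 2)⁻¹ < 1 := by
          rw [inv_lt_one_iff₀]; right; exact h5
        linarith
      have hr0 : r ≠ 0 := by linarith
      field_simp
      ring
    have ha' : a < (a + 1/σ)/2 := by linarith
    have ha'' : (a + 1/σ)/2 < 1/σ := by linarith
    have hevΨ : ∀ᶠ r in 𝓝[>] (1:ℝ),
        (a + 1/σ)/2 < ((r ^ σ + (r ^ σ - 1) ^ 2)⁻¹ * (r - 1) / r) /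
          (1 - (r ^ σ + (r ^ σ - 1) ^ 2)⁻¹) := hΨ.eventually (eventually_gt_nhds ha'')
    obtain ⟨r, hΨr, hr1, hr2⟩ := (hevΨ.and (hev1.and hev2)).exists
    have hs : 0 < r ^ σ - 1 := by linarith [hrσgt r hr1]
    have hs1 : r ^ σ - 1 < 1 := by linarith
    have hε : 0 < (r ^ σ - 1) ^ 2 := by positivity
    have hεs : (r ^ σ - 1) ^ 2 < r ^ σ - 1 := by nlinarith
    obtain ⟨C, hC, hkey⟩ := key r hr1 ((r ^ σ - 1) ^ 2) hε hεs
    set q' : ℝ := (r ^ σ + (r ^ σ - 1) ^ 2)⁻¹ with hq'def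
    have hq'den : 1 < r ^ σ + (r ^ σ - 1) ^ 2 := by nlinarith
    have hq'0 : 0 < q' := by rw [hq'def]; positivity
    have hq'1 : q' < 1 := by rw [hq'def, inv_lt_one_iff₀]; right; exact hq'den
    set Ψ : ℝ := (q' * (r - 1) / r) / (1 - q') with hΨdef
    have haΨ : a < Ψ := lt_trans ha' hΨr
    have hconv : Tendsto (fun k : ℕ => Ψ * (1 - q' ^ k)) atTop (𝓝 (Ψ * (1 - 0))) :=
      tendsto_const_nhds.mul
        (tendsto_const_nhds.sub (tendsto_pow_atTop_nhds_zero_of_lt_one hq'0.le hq'1))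
    rw [sub_zero, mul_one] at hconv
    obtain ⟨k₀, hk₀⟩ := (hconv.eventually (eventually_gt_nhds haΨ)).exists
    filter_upwards [hkey k₀] with x hx
    refine lt_of_lt_of_le ?_ hx.1
    calc a < Ψ * (1 - q' ^ k₀) := hk₀
    _ = q' * (r - 1) / r * (1 - q' ^ k₀) / (1 - q') := by
        rw [hΨdef]
        have h6 : (1:ℝ) - q' ≠ 0 := by linarith
        field_simp
  · -- upper bound branch
    intro bb hbb
    have hE : Tendsto (fun r : ℝ =>
        (r - 1) / (1 - (r ^ σ - (r ^ σ - 1) ^ 2)⁻¹)) (𝓝[>] (1:ℝ)) (𝓝 (1/σ)) := by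
      rw [one_div]
      have h2 : Tendsto (fun r : ℝ =>
          (r ^ σ - (r ^ σ - 1) ^ 2) / (1 - (r ^ σ - 1))) (𝓝[>] (1:ℝ)) (𝓝 1) := by
        have hnum : Tendsto (fun r : ℝ => r ^ σ - (r ^ σ - 1) ^ 2) (𝓝[>] (1:ℝ)) (𝓝 1) := by
          have h3 : Tendsto (fun r : ℝ => (r ^ σ - 1) ^ 2) (𝓝[>] (1:ℝ)) (𝓝 0) := by
            have := (hcontσ.sub (tendsto_const_nhds : Tendsto (fun _ : ℝ => (1:ℝ)) _ _)).pow 2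
            simpa using this
          have := hcontσ.sub h3
          simpa using this
        have hden : Tendsto (fun r : ℝ => 1 - (r ^ σ - 1)) (𝓝[>] (1:ℝ)) (𝓝 (1 - (1 - 1))) := by
          exact (tendsto_const_nhds : Tendsto (fun _ : ℝ => (1:ℝ)) (𝓝[>] (1:ℝ)) (𝓝 1)).sub
            (hcontσ.sub (tendsto_const_nhds : Tendsto (fun _ : ℝ => (1:ℝ)) (𝓝[>] (1:ℝ)) (𝓝 1)))
        rw [show (1:ℝ) - (1 - 1) = 1 by norm_num] at hden
        have := hnum.div hden (by norm_num)
        rw [div_one] at this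
        exact this
      have hprod := hslope'.mul h2
      rw [mul_one] at hprod
      refine hprod.congr' ?_
      filter_upwards [hev1, hev2] with r hr1 hr2
      have hs : 0 < r ^ σ - 1 := by linarith [hrσgt r hr1]
      have hs1 : r ^ σ - 1 < 1 := by linarith
      have hd1 : r ^ σ - (r ^ σ - 1) ^ 2 ≠ 0 := by nlinarith
      have hd4 : r ^ σ - 1 ≠ 0 := hs.ne'
      have hd5 : (1:ℝ) - (r ^ σ - 1) ≠ 0 := by linarith
      have h7 : 1 - (r ^ σ - (r ^ σ - 1) ^ 2)⁻¹
          = ((r ^ σ - (r ^ σ - 1) ^ 2) - 1) / (r ^ σ - (r ^ σ - 1) ^ 2) := by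
        field_simp
      rw [h7, div_div_eq_mul_div,
        show (r ^ σ - (r ^ σ - 1) ^ 2) - 1 = (r ^ σ - 1) * (1 - (r ^ σ - 1)) by ring]
      field_simp
    have hb' : 1/σ < (1/σ + bb)/2 := by linarith
    have hb'' : (1/σ + bb)/2 < bb := by linarith
    have hevE : ∀ᶠ r in 𝓝[>] (1:ℝ),
        (r - 1) / (1 - (r ^ σ - (r ^ σ - 1) ^ 2)⁻¹) < (1/σ + bb)/2 :=
      hE.eventually (eventually_lt_nhds hb')
    obtain ⟨r, hEr, hr1, hr2⟩ := (hevE.and (hev1.and hev2)).exists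
    have hs : 0 < r ^ σ - 1 := by linarith [hrσgt r hr1]
    have hs1 : r ^ σ - 1 < 1 := by linarith
    have hε : 0 < (r ^ σ - 1) ^ 2 := by positivity
    have hεs : (r ^ σ - 1) ^ 2 < r ^ σ - 1 := by nlinarith
    obtain ⟨C, hC, hkey⟩ := key r hr1 ((r ^ σ - 1) ^ 2) hε hεs
    have hqden : 1 < r ^ σ - (r ^ σ - 1) ^ 2 := by nlinarith
    have hq0 : 0 < (r ^ σ - (r ^ σ - 1) ^ 2)⁻¹ := by positivity
    have hq1 : (r ^ σ - (r ^ σ - 1) ^ 2)⁻¹ < 1 := by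
      rw [inv_lt_one_iff₀]; right; exact hqden
    have htail : Tendsto (fun k : ℕ => ((r ^ σ - (r ^ σ - 1) ^ 2)⁻¹) ^ k * C) atTop (𝓝 0) := by
      have := (tendsto_pow_atTop_nhds_zero_of_lt_one hq0.le hq1).mul_const C
      simpa using this
    obtain ⟨k₀, hk₀⟩ := (htail.eventually
      (eventually_lt_nhds (by linarith : (0:ℝ) < bb - (1/σ + bb)/2))).exists
    filter_upwards [hkey k₀] with x hx
    refine lt_of_le_of_lt hx.2 ?_
    linarith

set_option maxHeartbeats 1000000 in
theorem orbit_gap_asymptotics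
    (T V b : ℝ → ℝ) (σ : ℝ) (hσ : 0 < σ)
    (hVcont : ContinuousOn V (Ici 0)) (hVmono : StrictMonoOn V (Ici 0))
    (hVrange : ∀ x > (0:ℝ), V x ∈ Ioo (0:ℝ) 1)
    (hVreg : RegVary0 V σ)
    (hloc : ∃ ε > (0:ℝ), InjOn T (Ico 0 ε) ∧ ∀ x ∈ Ico (0:ℝ) ε, T x = x * (1 - V x))
    (hb : ∀ x > (0:ℝ), b (1 / V (1 / x)) = x) :
    ∃ δ > (0:ℝ), ∀ w : ℕ → ℝ, w 0 ∈ Ioo 0 δ → (∀ n, w (n + 1) = T (w n)) →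
      Tendsto (fun n : ℕ => |w n - w (n + 1)| * (σ ^ (1 + 1 / σ) * n * b n)) atTop (𝓝 1) := by
  classical
  obtain ⟨ε₀, hε₀, hTinj, hT⟩ := hloc
  refine ⟨ε₀ / 2, by linarith, ?_⟩
  intro w hw0 hrec
  set x₀ : ℝ := ε₀ / 2 with hx₀def
  have hx₀ : 0 < x₀ := by rw [hx₀def]; linarith
  -- orbit facts
  have horb : ∀ n, 0 < w n ∧ w n ≤ w 0 := by
    intro n
    induction n with
    | zero => exact ⟨hw0.1, le_refl _⟩
    | succ n ih =>
      have hwn : w n ∈ Ico (0:ℝ) ε₀ := ⟨ih.1.le, by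
        have := hw0.2; rw [hx₀def] at *; linarith [ih.2]⟩
      have hstep : w (n+1) = w n * (1 - V (w n)) := by rw [hrec n, hT _ hwn]
      have hV := hVrange (w n) ih.1
      obtain ⟨hV1, hV2⟩ := hV
      constructor
      · rw [hstep]; exact mul_pos ih.1 (by linarith)
      · rw [hstep]; nlinarith [ih.1, ih.2]
  have hwpos : ∀ n, 0 < w n := fun n => (horb n).1
  have hwle : ∀ n, w n ≤ w 0 := fun n => (horb n).2
  have hwltx₀ : ∀ n, w n < x₀ := fun n => lt_of_le_of_lt (hwle n) hw0.2
  have hstep : ∀ n, w (n+1) = w n * (1 - V (w n)) := by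
    intro n
    have hwn : w n ∈ Ico (0:ℝ) ε₀ := ⟨(hwpos n).le, by
      have := hwltx₀ n; rw [hx₀def] at this; linarith⟩
    rw [hrec n, hT _ hwn]
  have hVw : ∀ n, V (w n) ∈ Ioo (0:ℝ) 1 := fun n => hVrange _ (hwpos n)
  have hdec : ∀ n, w (n+1) < w n := by
    intro n
    rw [hstep n]
    nlinarith [(hVw n).1, (hVw n).2, hwpos n]
  -- limit zero
  have hanti : Antitone w := antitone_nat_of_succ_le (fun n => (hdec n).le)
  have hbdd : BddBelow (range w) := ⟨0, fun v ⟨n, hn⟩ => hn ▸ (hwpos n).le⟩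
  have hL : Tendsto w atTop (𝓝 (⨅ n, w n)) := tendsto_atTop_ciInf hanti hbdd
  set L : ℝ := ⨅ n, w n with hLdef
  have hL0 : 0 ≤ L := ge_of_tendsto hL (Eventually.of_forall fun n => (hwpos n).le)
  have hLzero : L = 0 := by
    by_contra hne
    have hLpos : 0 < L := lt_of_le_of_ne hL0 (Ne.symm hne)
    have hVL : Tendsto (fun n => V (w n)) atTop (𝓝 (V L)) := by
      have hcw : Tendsto w atTop (𝓝[Ici 0] L) :=
        tendsto_nhdsWithin_of_tendsto_nhds_of_eventually_within w hL
          (Eventually.of_forall fun n => (hwpos n).le)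
      exact ((hVcont L hL0).tendsto).comp hcw
    have h1 : Tendsto (fun n => w (n+1)) atTop (𝓝 L) := hL.comp (tendsto_add_atTop_nat 1)
    have h2 : Tendsto (fun n => w n * (1 - V (w n))) atTop (𝓝 (L * (1 - V L))) :=
      hL.mul (tendsto_const_nhds.sub hVL)
    have heq := tendsto_nhds_unique h1 (h2.congr (fun n => (hstep n).symm))
    have hVLpos : 0 < V L := (hVrange L hLpos).1
    nlinarith [heq]
  rw [hLzero] at hL
  have hw0' : Tendsto w atTop (𝓝[>] (0:ℝ)) :=
    tendsto_nhdsWithin_of_tendsto_nhds_of_eventually_within w hL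
      (Eventually.of_forall fun n => hwpos n)
  have hVwlim : Tendsto (fun n => V (w n)) atTop (𝓝 0) :=
    (aux_tendsto_V0 V σ hσ hVcont hVrange hVreg).comp hw0'
  -- ratio of successive V's tends to 1
  have hone_sub : Tendsto (fun n => 1 - V (w n)) atTop (𝓝 1) := by
    have := (tendsto_const_nhds : Tendsto (fun _ : ℕ => (1:ℝ)) atTop (𝓝 1)).sub hVwlim
    simpa using this
  have hratio1 : Tendsto (fun n => V ((1 - V (w n)) * w n) / V (w n)) atTop (𝓝 1) := by
    have := aux_ratio_seq V σ hσ hVmono hVrange hVreg one_pos hw0' hone_sub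
    rwa [Real.one_rpow] at this
  have hwsucc : ∀ n, w (n+1) = (1 - V (w n)) * w n := fun n => by rw [hstep n]; ring
  have hVsucc_ratio : Tendsto (fun n => V (w (n+1)) / V (w n)) atTop (𝓝 1) :=
    hratio1.congr (fun n => by rw [← hwsucc n])
  -- the integral increments
  set d : ℕ → ℝ := fun n => ∫ u in w (n+1)..w n, (u * V u)⁻¹ with hddef
  have hdiff : ∀ n, w n - w (n+1) = w n * V (w n) := by
    intro n; rw [hstep n]; ring
  have hdlow : ∀ n, 1 ≤ d n := by
    intro n
    have h1 := (aux_int_bounds V hVcont hVmono hVrange (hwpos (n+1)) (hdec n).le).1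
    have h2 : (w n - w (n+1)) * (w n * V (w n))⁻¹ = 1 := by
      rw [hdiff n]
      exact mul_inv_cancel₀ (mul_pos (hwpos n) (hVw n).1).ne'
    rw [← h2]
    exact h1
  have hdhigh : ∀ n, d n ≤ (w n * V (w n)) * (w (n+1) * V (w (n+1)))⁻¹ := by
    intro n
    have h1 := (aux_int_bounds V hVcont hVmono hVrange (hwpos (n+1)) (hdec n).le).2
    rw [hdiff n] at h1
    exact h1
  have hupper_lim : Tendsto (fun n => (w n * V (w n)) * (w (n+1) * V (w (n+1)))⁻¹)
      atTop (𝓝 1) := by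
    have hq1 : Tendsto (fun n => (1 - V (w n))⁻¹) atTop (𝓝 1) := by
      have := hone_sub.inv₀ one_ne_zero
      rwa [inv_one] at this
    have hq2 : Tendsto (fun n => (V (w (n+1)) / V (w n))⁻¹) atTop (𝓝 1) := by
      have := hVsucc_ratio.inv₀ one_ne_zero
      rwa [inv_one] at this
    have hmul := hq1.mul hq2
    rw [mul_one] at hmul
    refine hmul.congr (fun n => ?_)
    have hne4 : w n ≠ 0 := (hwpos n).ne'
    have hAB : w n * (w (n+1))⁻¹ = (1 - V (w n))⁻¹ := by
      rw [hstep n, mul_inv, ← mul_assoc, mul_inv_cancel₀ hne4, one_mul]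
    rw [mul_inv, inv_div, ← hAB]
    ring
  have hdlim : Tendsto d atTop (𝓝 1) :=
    tendsto_of_tendsto_of_tendsto_of_le_of_le tendsto_const_nhds hupper_lim hdlow hdhigh
  -- telescoping and Cesàro
  set G : ℝ → ℝ := fun x => ∫ u in x..x₀, (u * V u)⁻¹ with hGdef
  have hGtel : ∀ n, G (w n) = G (w 0) + ∑ k ∈ Finset.range n, d k := by
    intro n
    induction n with
    | zero => simp
    | succ n ih =>
      have hsplit : G (w (n+1)) = d n + G (w n) := by
        rw [hGdef, hddef]
        exact (intervalIntegral.integral_add_adjacent_intervals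
          (aux_intble V hVcont hVrange (hwpos (n+1)) (hdec n).le)
          (aux_intble V hVcont hVrange (hwpos n) (hwltx₀ n).le)).symm
      rw [hsplit, ih, Finset.sum_range_succ]
      ring
  have hGdiv : Tendsto (fun n : ℕ => (n:ℝ)⁻¹ * G (w n)) atTop (𝓝 1) := by
    have hces := hdlim.cesaro
    have hzero : Tendsto (fun n : ℕ => (n:ℝ)⁻¹ * G (w 0)) atTop (𝓝 0) := by
      have := (tendsto_inv_atTop_zero.comp tendsto_natCast_atTop_atTop).mul_const (G (w 0))
      simpa using this
    have hsum := hzero.add hces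
    rw [zero_add] at hsum
    refine hsum.congr (fun n => ?_)
    rw [hGtel n]
    ring
  -- Karamata composed with the orbit
  have hkar : Tendsto (fun n => G (w n) * V (w n)) atTop (𝓝 (1/σ)) :=
    (aux_karamata V σ x₀ hσ hx₀ hVcont hVmono hVrange hVreg).comp hw0'
  -- n * V (w n) → 1/σ
  have hGpos : ∀ n, 0 < G (w n) := by
    intro n
    refine lt_of_lt_of_le ?_
      (aux_int_bounds V hVcont hVmono hVrange (hwpos n) (hwltx₀ n).le).1
    have h1 : 0 < V x₀ := (hVrange x₀ hx₀).1
    have h2 : 0 < x₀ - w n := by linarith [hwltx₀ n]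
    positivity
  have hnV : Tendsto (fun n : ℕ => (n:ℝ) * V (w n)) atTop (𝓝 (1/σ)) := by
    have hdivlim := hkar.div hGdiv one_ne_zero
    rw [div_one] at hdivlim
    refine hdivlim.congr' ?_
    filter_upwards [eventually_gt_atTop 0] with n hn
    have hne1 : G (w n) ≠ 0 := (hGpos n).ne'
    have hne2 : (n:ℝ) ≠ 0 := Nat.cast_ne_zero.2 hn.ne'
    show G (w n) * V (w n) / ((n:ℝ)⁻¹ * G (w n)) = n * V (w n)
    field_simp
  -- construction of the inverse sequence y
  have hVx₀pos : 0 < V x₀ := (hVrange x₀ hx₀).1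
  have hV0 : V 0 = 0 := aux_V_zero V σ hσ hVcont hVrange hVreg
  have hyex : ∀ n : ℕ, (V x₀)⁻¹ < (n:ℝ) → ∃ z, z ∈ Ioo (0:ℝ) x₀ ∧ V z = 1/(n:ℝ) := by
    intro n hn
    have hnpos : (0:ℝ) < n := lt_trans (inv_pos.2 hVx₀pos) hn
    have h1 : 1/(n:ℝ) < V x₀ := by
      rw [div_lt_iff₀ hnpos]
      have h2 := (mul_lt_mul_iff_right₀ hVx₀pos).2 hn
      rw [mul_inv_cancel₀ hVx₀pos.ne'] at h2
      linarith
    have hmem : 1/(n:ℝ) ∈ Ioo (V 0) (V x₀) := by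
      rw [hV0]; exact ⟨by positivity, h1⟩
    obtain ⟨z, hz, hVz⟩ := intermediate_value_Ioo hx₀.le (hVcont.mono Icc_subset_Ici_self) hmem
    exact ⟨z, hz, hVz⟩
  choose! y hy1 hy2 using hyex
  have hNev : ∀ᶠ n : ℕ in atTop, (V x₀)⁻¹ < (n:ℝ) :=
    tendsto_natCast_atTop_atTop.eventually_gt_atTop _
  have hbn : ∀ n : ℕ, (V x₀)⁻¹ < (n:ℝ) → b n = (y n)⁻¹ := by
    intro n hn
    have hyn := hy1 n hn
    have hVy := hy2 n hn
    have h0 : (0:ℝ) < (y n)⁻¹ := by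
      have := hyn.1; positivity
    have hbb := hb ((y n)⁻¹) h0
    simp only [one_div, inv_inv] at hbb
    rw [hVy] at hbb
    simp only [one_div, inv_inv] at hbb
    exact hbb
  -- y tends to zero from the right
  have hy0 : Tendsto y atTop (𝓝[>] (0:ℝ)) := by
    apply tendsto_nhdsWithin_of_tendsto_nhds_of_eventually_within
    · rw [tendsto_order]
      constructor
      · intro a ha
        filter_upwards [hNev] with n hn
        exact lt_trans ha (hy1 n hn).1
      · intro η hη
        by_cases hcase : x₀ ≤ η
        · filter_upwards [hNev] with n hn
          exact lt_of_lt_of_le (hy1 n hn).2 hcase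
        · push_neg at hcase
          have hVη : 0 < V η := (hVrange η hη).1
          have hev2 : ∀ᶠ n : ℕ in atTop, (V η)⁻¹ < (n:ℝ) :=
            tendsto_natCast_atTop_atTop.eventually_gt_atTop _
          filter_upwards [hNev, hev2] with n hn hn2
          by_contra hc
          push_neg at hc
          have h1 : V η ≤ V (y n) :=
            (hVmono.monotoneOn) (mem_Ici.2 hη.le) (mem_Ici.2 (hy1 n hn).1.le) hc
          rw [hy2 n hn] at h1
          have hnpos : (0:ℝ) < n := lt_trans (inv_pos.2 hVη) hn2
          have h2 : 1/(n:ℝ) < V η := by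
            rw [div_lt_iff₀ hnpos]
            have h3 := (mul_lt_mul_iff_right₀ hVη).2 hn2
            rw [mul_inv_cancel₀ hVη.ne'] at h3
            linarith
          linarith
    · filter_upwards [hNev] with n hn
      exact (hy1 n hn).1
  -- w n / y n tends to σ ^ (-(1/σ))
  have hc₀pos : 0 < σ ^ (-(1/σ)) := Real.rpow_pos_of_pos hσ _
  have hc₀σ : (σ ^ (-(1/σ))) ^ σ = 1/σ := by
    rw [← Real.rpow_mul hσ.le]
    rw [show -(1/σ) * σ = -1 by field_simp]
    rw [Real.rpow_neg_one, one_div]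
  have hwy : Tendsto (fun n => w n / y n) atTop (𝓝 (σ ^ (-(1/σ)))) := by
    rw [tendsto_order]
    constructor
    · intro a ha
      rcases le_or_gt a 0 with hle | hapos
      · filter_upwards [hNev] with n hn
        exact lt_of_le_of_lt hle (div_pos (hwpos n) (hy1 n hn).1)
      · have haσ : a ^ σ < 1/σ := by
          have := Real.rpow_lt_rpow hapos.le ha hσ
          rwa [hc₀σ] at this
        have hra : Tendsto (fun n => V (a * y n) / V (y n)) atTop (𝓝 (a ^ σ)) :=
          (hVreg a hapos).comp hy0
        have hlt := hra.eventually_lt hnV haσ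
        filter_upwards [hlt, hNev] with n h1 hn
        have hynpos : 0 < y n := (hy1 n hn).1
        have hnpos : (0:ℝ) < n := lt_trans (inv_pos.2 hVx₀pos) hn
        rw [hy2 n hn, one_div, div_inv_eq_mul] at h1
        have h2 : V (a * y n) < V (w n) := by
          have h3 : V (a * y n) * n < V (w n) * n := by
            calc V (a * y n) * n < (n:ℝ) * V (w n) := h1
            _ = V (w n) * n := by ring
          exact (mul_lt_mul_iff_left₀ hnpos).1 h3
        have h4 : a * y n < w n :=
          (hVmono.lt_iff_lt (mem_Ici.2 (by positivity)) (mem_Ici.2 (hwpos n).le)).1 h2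
        exact (lt_div_iff₀ hynpos).2 h4
    · intro bb hbb
      have hbpos : 0 < bb := lt_trans hc₀pos hbb
      have hbσ : 1/σ < bb ^ σ := by
        have := Real.rpow_lt_rpow hc₀pos.le hbb hσ
        rwa [hc₀σ] at this
      have hrb : Tendsto (fun n => V (bb * y n) / V (y n)) atTop (𝓝 (bb ^ σ)) :=
        (hVreg bb hbpos).comp hy0
      have hlt := hnV.eventually_lt hrb hbσ
      filter_upwards [hlt, hNev] with n h1 hn
      have hynpos : 0 < y n := (hy1 n hn).1
      have hnpos : (0:ℝ) < n := lt_trans (inv_pos.2 hVx₀pos) hn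
      rw [hy2 n hn, one_div, div_inv_eq_mul] at h1
      have h2 : V (w n) < V (bb * y n) := by
        have h3 : V (w n) * n < V (bb * y n) * n := by
          calc V (w n) * n = (n:ℝ) * V (w n) := by ring
          _ < V (bb * y n) * n := h1
        exact (mul_lt_mul_iff_left₀ hnpos).1 h3
      have h4 : w n < bb * y n :=
        (hVmono.lt_iff_lt (mem_Ici.2 (hwpos n).le) (mem_Ici.2 (by positivity))).1 h2
      exact (div_lt_iff₀ hynpos).2 h4
  -- final assembly
  have hfin1 : Tendsto (fun n : ℕ => σ * ((n:ℝ) * V (w n))) atTop (𝓝 1) := by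
    have := (tendsto_const_nhds : Tendsto (fun _ : ℕ => σ) atTop (𝓝 σ)).mul hnV
    rwa [mul_one_div, div_self hσ.ne'] at this
  have hfin := (hwy.mul hfin1).mul_const (σ ^ (1/σ))
  rw [mul_one, ← Real.rpow_add hσ, neg_add_cancel, Real.rpow_zero] at hfin
  refine hfin.congr' ?_
  filter_upwards [hNev] with n hn
  have habs : |w n - w (n+1)| = w n * V (w n) := by
    rw [hdiff n, abs_of_pos (mul_pos (hwpos n) (hVw n).1)]
  have hσpow : σ ^ ((1:ℝ) + 1/σ) = σ * σ ^ (1/σ) := by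
    rw [Real.rpow_add hσ, Real.rpow_one]
  show w n / y n * (σ * ((n:ℝ) * V (w n))) * σ ^ (1/σ)
      = |w n - w (n+1)| * (σ ^ ((1:ℝ) + 1/σ) * n * b n)
  rw [habs, hσpow, hbn n hn, div_eq_mul_inv]
  ring
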